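/- Let X ⊆ G be a reversible semiregular RDS with forbidden subgroup N of order n, parameters (nλ, n, nλ, λ), and e ∈ X. If λ = n, then S = X^# ∪ N^# is a reversible partial difference set in G with parameters (n³, n²+n−2, n−2, n+2). -/

import Mathlib

open Finset MonoidAlgebra

/-- The element of the integral group ring `ℤG` given by the sum of the elements of `X`. -/
noncomputable def gsum {G : Type*} [Group G] (X : Finset G) : MonoidAlgebra ℤ G :=
  ∑ x ∈ X, MonoidAlgebra.single x (1 : ℤ)

section Aux
variable {G : Type*} [Group G] [DecidableEq G]

lemma gsum_mul' (X Y : Finset G) :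
    gsum X * gsum Y = ∑ x ∈ X, ∑ y ∈ Y, MonoidAlgebra.single (x * y) (1 : ℤ) := by
  simp [gsum, Finset.sum_mul_sum, MonoidAlgebra.single_mul_single]

lemma gsum_apply' (X : Finset G) (g : G) : (gsum X).coeff g = if g ∈ X then 1 else 0 := by
  classical
  rw [gsum, MonoidAlgebra.coeff_sum, Finsupp.finset_sum_apply]
  simp [Finsupp.single_apply]

lemma gsum_erase_one (X : Finset G) (h : (1 : G) ∈ X) :
    gsum (X.erase 1) = gsum X - 1 := by
  rw [gsum, gsum, ← Finset.add_sum_erase X _ h, MonoidAlgebra.one_def]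
  abel

end Aux

/-- If `X` is a reversible semiregular RDS with `e ∈ X`, forbidden subgroup `N` of order `n`,
parameters `(nλ, n, nλ, λ)` with `λ = n`, then `S = X^# ∪ N^#` is a reversible PDS with
parameters `(n³, n² + n − 2, n − 2, n + 2)`. -/
theorem stmt7 {G : Type*} [Group G] [Fintype G] [DecidableEq G]
    (N : Subgroup G) [DecidablePred (· ∈ N)]
    (Nfin : Finset G) (hNfin : Nfin = Finset.univ.filter (· ∈ N))
    (n : ℕ) (hn : Nat.card N = n) (hG : Fintype.card G = n ^ 3)
    (X : Finset G) (hrev : X.image (·⁻¹) = X) (heX : (1 : G) ∈ X) (hcard : X.card = n ^ 2)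
    (hRDS : gsum X * gsum X =
      (n ^ 2) • (1 : MonoidAlgebra ℤ G) + n • (gsum (Finset.univ : Finset G) - gsum Nfin))
    (hsemi1 : gsum Nfin * gsum X = gsum (Finset.univ : Finset G))
    (hsemi2 : gsum X * gsum Nfin = gsum (Finset.univ : Finset G))
    (S : Finset G) (hS : S = (X.erase 1) ∪ (Nfin.erase 1)) :
    S.image (·⁻¹) = S ∧ S.card = n ^ 2 + n - 2 ∧
      gsum S * gsum S =
        ((n : ℤ) ^ 2 + n - 2) • (1 : MonoidAlgebra ℤ G) + ((n : ℤ) - 2) • gsum S +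
          ((n : ℤ) + 2) • (gsum (Finset.univ.erase (1 : G)) - gsum S) := by
  classical
  have hmemN : ∀ g : G, g ∈ Nfin ↔ g ∈ N := by
    intro g; simp [hNfin]
  have h1N : (1 : G) ∈ Nfin := (hmemN 1).2 (one_mem N)
  have hNinv : ∀ g : G, g ∈ Nfin → g⁻¹ ∈ Nfin := fun g hg =>
    (hmemN _).2 (inv_mem ((hmemN _).1 hg))
  have hNcard : Nfin.card = n := by
    rw [hNfin, ← Fintype.card_subtype, ← Nat.card_eq_fintype_card]
    exact hn
  have hnpos : 0 < n := by
    rw [← hNcard, hNfin]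
    exact Finset.card_pos.2 ⟨1, by simp [one_mem]⟩
  -- the coefficient of 1 in gsum X * gsum Nfin
  have hcoef : (X.filter (fun x => x⁻¹ ∈ Nfin)).card = 1 := by
    have h : (gsum X * gsum Nfin).coeff 1 = (gsum (Finset.univ : Finset G)).coeff 1 := by rw [hsemi2]
    rw [gsum_mul', gsum_apply'] at h
    have inner : ∀ x : G, ((∑ y ∈ Nfin, MonoidAlgebra.single (x * y) (1:ℤ)).coeff 1 : ℤ)
        = if x⁻¹ ∈ Nfin then 1 else 0 := by
      intro x
      rw [MonoidAlgebra.coeff_sum, Finsupp.finset_sum_apply]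
      simp [Finsupp.single_apply, mul_eq_one_iff_inv_eq, Finset.sum_ite_eq]
    rw [MonoidAlgebra.coeff_sum, Finsupp.finset_sum_apply, Finset.sum_congr rfl (fun x _ => inner x),
      Finset.sum_boole] at h
    simp only [Finset.mem_univ, if_true] at h
    exact_mod_cast h
  -- intersection is {1}
  have hint : ∀ g : G, g ∈ X → g ∈ Nfin → g = 1 := by
    intro g hgX hgN
    obtain ⟨a, ha⟩ := Finset.card_eq_one.1 hcoef
    have hg : g ∈ X.filter (fun x => x⁻¹ ∈ Nfin) :=
      Finset.mem_filter.2 ⟨hgX, hNinv g hgN⟩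
    have h1 : (1:G) ∈ X.filter (fun x => x⁻¹ ∈ Nfin) :=
      Finset.mem_filter.2 ⟨heX, by simpa using h1N⟩
    rw [ha, Finset.mem_singleton] at hg h1
    rw [hg, h1]
  have hdisj : Disjoint (X.erase 1) (Nfin.erase 1) := by
    rw [Finset.disjoint_left]
    intro a haX haN
    exact absurd (hint a (Finset.mem_of_mem_erase haX) (Finset.mem_of_mem_erase haN))
      (Finset.ne_of_mem_erase haX)
  -- reversibility
  have hNrev : Nfin.image (·⁻¹) = Nfin := by
    ext g
    simp only [Finset.mem_image]
    constructor
    · rintro ⟨a, ha, rfl⟩; exact hNinv a ha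
    · intro hg; exact ⟨g⁻¹, hNinv g hg, inv_inv g⟩
  have hrevS : S.image (·⁻¹) = S := by
    rw [hS, Finset.image_union, Finset.image_erase inv_injective,
      Finset.image_erase inv_injective, hrev, hNrev, inv_one]
  -- cardinality
  have hcardS : S.card = n ^ 2 + n - 2 := by
    rw [hS, Finset.card_union_of_disjoint hdisj, Finset.card_erase_of_mem heX,
      Finset.card_erase_of_mem h1N, hcard, hNcard]
    have h1 : 1 ≤ n := hnpos
    have h2 : 1 ≤ n ^ 2 := Nat.one_le_pow _ _ hnpos
    omega
  refine ⟨hrevS, hcardS, ?_⟩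
  -- algebra
  have hgs : gsum S = gsum X + gsum Nfin - (2:ℤ) • 1 := by
    rw [hS, gsum, Finset.sum_union hdisj, ← gsum, ← gsum, gsum_erase_one _ heX,
      gsum_erase_one _ h1N]
    push_cast
    abel
  have hbb : gsum Nfin * gsum Nfin = (n : ℤ) • gsum Nfin := by
    rw [gsum_mul']
    have : ∀ a ∈ Nfin, (∑ y ∈ Nfin, MonoidAlgebra.single (a * y) (1:ℤ)) = gsum Nfin := by
      intro a ha
      rw [gsum]
      apply Finset.sum_nbij' (fun y => a * y) (fun y => a⁻¹ * y)
      · intro y hy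
        exact (hmemN _).2 (mul_mem ((hmemN _).1 ha) ((hmemN _).1 hy))
      · intro y hy
        exact (hmemN _).2 (mul_mem (inv_mem ((hmemN _).1 ha)) ((hmemN _).1 hy))
      · intro y _; group
      · intro y _; group
      · intro y _; rfl
    rw [Finset.sum_congr rfl this, Finset.sum_const, hNcard]
    rw [← Nat.cast_smul_eq_nsmul ℤ]
  have huerase : gsum ((Finset.univ : Finset G).erase 1) = gsum (Finset.univ : Finset G) - 1 :=
    gsum_erase_one _ (Finset.mem_univ 1)
  have hRDS' : gsum X * gsum X = ((n:ℤ) ^ 2) • (1 : MonoidAlgebra ℤ G)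
      + (n:ℤ) • (gsum (Finset.univ : Finset G) - gsum Nfin) := by
    rw [hRDS, ← Nat.cast_smul_eq_nsmul ℤ (n^2), ← Nat.cast_smul_eq_nsmul ℤ n]
    push_cast
    ring_nf
  rw [hgs, huerase]
  have expand : (gsum X + gsum Nfin - (2:ℤ) • 1) * (gsum X + gsum Nfin - (2:ℤ) • 1)
      = gsum X * gsum X + gsum X * gsum Nfin + gsum Nfin * gsum X + gsum Nfin * gsum Nfin
        - (2:ℤ) • (gsum X) - (2:ℤ) • gsum Nfin - (2:ℤ) • gsum X - (2:ℤ) • gsum Nfin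
        + (4:ℤ) • (1 : MonoidAlgebra ℤ G) := by
    simp only [zsmul_eq_mul]
    push_cast
    noncomm_ring
  rw [expand, hRDS', hsemi1, hsemi2, hbb]
  module
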